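/- Let Z₁, …, Z_m be i.i.d. random variables with values in a set D and let g : D^m → ℝ satisfy the bounded differences condition: changing any single argument changes g by at most C. Then for all ε > 0, P[g(Z₁,…,Z_m) − E[g(Z₁,…,Z_m)] ≥ εm] ≤ exp(−2ε²m/C²), and the same bound holds for the lower deviation P[E[g] − g ≥ εm]. -/

import Mathlib

open MeasureTheory
open Real

section McDiarmidAux

lemma denom_pos {p : ℝ} (hp0 : 0 ≤ p) (hp1 : p ≤ 1) (u : ℝ) :
    0 < 1 - p + p * Real.exp u := by
  rcases eq_or_lt_of_le hp1 with h | h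
  · have := Real.exp_pos u; nlinarith
  · have := Real.exp_pos u; nlinarith

lemma hoeffding_core {p : ℝ} (hp0 : 0 ≤ p) (hp1 : p ≤ 1) (u : ℝ) :
    Real.log (1 - p + p * Real.exp u) ≤ p * u + u ^ 2 / 8 := by
  set F : ℝ → ℝ := fun u => Real.log (1 - p + p * Real.exp u) - p * u - u ^ 2 / 8 with hF
  set F' : ℝ → ℝ := fun u => p * Real.exp u / (1 - p + p * Real.exp u) - p - u / 4 with hF'
  have hd : ∀ u, 0 < 1 - p + p * Real.exp u := denom_pos hp0 hp1
  have hder : ∀ u, HasDerivAt F (F' u) u := by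
    intro u
    have h1 : HasDerivAt (fun u => 1 - p + p * Real.exp u) (p * Real.exp u) u :=
      ((Real.hasDerivAt_exp u).const_mul p).const_add (1 - p)
    have h2 := h1.log (hd u).ne'
    have h3 : HasDerivAt (fun u : ℝ => p * u + u ^ 2 / 8) (p + u / 4) u := by
      have := ((hasDerivAt_pow 2 u).div_const 8).const_add 0
      have h4 : HasDerivAt (fun u : ℝ => p * u) p u := by simpa using (hasDerivAt_id u).const_mul p
      have h5 : HasDerivAt (fun u : ℝ => u ^ 2 / 8) (u / 4) u := by
        have := (hasDerivAt_pow 2 u).div_const 8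
        exact this.congr_deriv (by ring)
      exact h4.add h5
    have := h2.sub h3
    refine HasDerivAt.congr_deriv (HasDerivAt.congr_of_eventuallyEq this (Filter.Eventually.of_forall fun v => ?_)) ?_
    · simp only [hF, Pi.sub_apply]; ring
    · simp only [hF']; ring
  have hder' : ∀ u, HasDerivAt F' (p * Real.exp u * (1 - p) / (1 - p + p * Real.exp u) ^ 2 - 1 / 4) u := by
    intro u
    have h1 : HasDerivAt (fun u => p * Real.exp u) (p * Real.exp u) u :=
      ((Real.hasDerivAt_exp u).const_mul p)
    have h2 : HasDerivAt (fun u => 1 - p + p * Real.exp u) (p * Real.exp u) u :=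
      ((Real.hasDerivAt_exp u).const_mul p).const_add (1 - p)
    have h3 := h1.div h2 (hd u).ne'
    have h4 : HasDerivAt (fun u : ℝ => p + u / 4) (1 / 4) u := by
      simpa using ((hasDerivAt_id u).div_const 4).const_add p
    have := h3.sub h4
    refine HasDerivAt.congr_deriv (HasDerivAt.congr_of_eventuallyEq this (Filter.Eventually.of_forall fun v => ?_)) ?_
    · simp only [hF', Pi.sub_apply, Pi.div_apply]; ring
    · ring
  have hdd : ∀ u, p * Real.exp u * (1 - p) / (1 - p + p * Real.exp u) ^ 2 - 1 / 4 ≤ 0 := by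
    intro u
    have h := hd u
    rw [sub_nonpos, div_le_iff₀ (by positivity)]
    nlinarith [sq_nonneg (p * Real.exp u - (1 - p)), Real.exp_pos u]
  have hanti : Antitone F' := antitone_of_hasDerivAt_nonpos hder' hdd
  have hF'0 : F' 0 = 0 := by simp [hF']
  have key : ∀ u, F u ≤ F 0 := by
    intro u
    rcases le_total u 0 with h | h
    · have hmono : MonotoneOn F (Set.Iic 0) := by
        apply monotoneOn_of_deriv_nonneg (convex_Iic 0)
          (fun x _ => (hder x).continuousAt.continuousWithinAt)
          (fun x _ => ((hder x).differentiableAt).differentiableWithinAt)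
        intro x hx
        rw [(hder x).deriv]
        rw [interior_Iic] at hx
        have := hanti (le_of_lt hx)
        rw [hF'0] at this; linarith
      exact hmono h Set.self_mem_Iic h
    · have hmono : AntitoneOn F (Set.Ici 0) := by
        apply antitoneOn_of_deriv_nonpos (convex_Ici 0)
          (fun x _ => (hder x).continuousAt.continuousWithinAt)
          (fun x _ => ((hder x).differentiableAt).differentiableWithinAt)
        intro x hx
        rw [(hder x).deriv]
        rw [interior_Ici] at hx
        have := hanti (le_of_lt hx)
        rw [hF'0] at this; linarith
      exact hmono Set.self_mem_Ici h h
    done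
  have := key u
  simp [hF] at this
  linarith

lemma integrable_of_abs_le {Ω : Type*} [MeasurableSpace Ω] {μ : Measure Ω}
    [IsFiniteMeasure μ] {f : Ω → ℝ} (hf : Measurable f) {K : ℝ}
    (hK : ∀ ω, |f ω| ≤ K) : Integrable f μ :=
  (integrable_const K).mono' hf.aestronglyMeasurable (ae_of_all _ fun ω => hK ω)

lemma hoeffding_lemma {Ω : Type*} [MeasurableSpace Ω] (μ : Measure Ω) [IsProbabilityMeasure μ]
    (X : Ω → ℝ) (hX : Measurable X) (a b : ℝ) (hbound : ∀ ω, X ω ∈ Set.Icc a b)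
    (hmean : ∫ ω, X ω ∂μ = 0) (t : ℝ) :
    ∫ ω, Real.exp (t * X ω) ∂μ ≤ Real.exp (t ^ 2 * (b - a) ^ 2 / 8) := by
  have hΩ : Nonempty Ω := by
    by_contra h
    rw [not_nonempty_iff] at h
    have h1 : μ Set.univ = 1 := measure_univ
    rw [Set.univ_eq_empty_iff.2 h, measure_empty] at h1
    exact zero_ne_one h1
  obtain ⟨ω₀⟩ := hΩ
  have hab : a ≤ b := le_trans (hbound ω₀).1 (hbound ω₀).2
  have hXint : Integrable X μ := integrable_of_abs_le hX (K := max |a| |b|) fun ω =>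
    abs_le.2 ⟨le_trans (neg_le_neg (le_max_left |a| |b|)) (neg_abs_le a |>.trans (hbound ω).1),
      le_trans (hbound ω).2 ((le_abs_self b).trans (le_max_right _ _))⟩
  have ha0 : a ≤ 0 := by
    have : ∫ _ω, a ∂μ ≤ ∫ ω, X ω ∂μ :=
      integral_mono (integrable_const a) hXint fun ω => (hbound ω).1
    simpa [hmean] using this
  have hb0 : 0 ≤ b := by
    have : ∫ ω, X ω ∂μ ≤ ∫ _ω, b ∂μ :=
      integral_mono hXint (integrable_const b) fun ω => (hbound ω).2
    simpa [hmean] using this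
  rcases eq_or_lt_of_le hab with heq | hlt
  · -- a = b, so a = 0 = b and X = 0
    have ha : a = 0 := le_antisymm ha0 (heq ▸ hb0)
    have hXz : ∀ ω, X ω = 0 := fun ω =>
      le_antisymm ((hbound ω).2.trans_eq (heq ▸ ha)) (ha ▸ (hbound ω).1)
    simp only [hXz, mul_zero, Real.exp_zero, integral_const, measure_univ, ENNReal.toReal_one, probReal_univ,
      smul_eq_mul, mul_one]
    exact Real.one_le_exp (by positivity)
  · -- a < b
    have hba : 0 < b - a := sub_pos.2 hlt
    -- convexity bound pointwise
    have hconv : ∀ ω, Real.exp (t * X ω) ≤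
        (b - X ω) / (b - a) * Real.exp (t * a) + (X ω - a) / (b - a) * Real.exp (t * b) := by
      intro ω
      have h1 : 0 ≤ (b - X ω) / (b - a) := div_nonneg (by linarith [(hbound ω).2]) hba.le
      have h2 : 0 ≤ (X ω - a) / (b - a) := div_nonneg (by linarith [(hbound ω).1]) hba.le
      have h3 : (b - X ω) / (b - a) + (X ω - a) / (b - a) = 1 := by field_simp; ring
      have := convexOn_exp.2 (Set.mem_univ (t * a)) (Set.mem_univ (t * b)) h1 h2 h3
      simp only [smul_eq_mul] at this
      have harg : (b - X ω) / (b - a) * (t * a) + (X ω - a) / (b - a) * (t * b) = t * X ω := by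
        field_simp; ring
      rwa [harg] at this
    -- integrate
    have hExpInt : Integrable (fun ω => Real.exp (t * X ω)) μ := by
      apply integrable_of_abs_le (hX.const_mul t).exp (K := Real.exp (|t| * max |a| |b|))
      intro ω
      rw [abs_of_pos (Real.exp_pos _), Real.exp_le_exp]
      calc t * X ω ≤ |t * X ω| := le_abs_self _
        _ = |t| * |X ω| := abs_mul _ _
        _ ≤ |t| * max |a| |b| := by
            apply mul_le_mul_of_nonneg_left _ (abs_nonneg t)
            apply abs_le.2
            constructor
            · calc -(max |a| |b|) ≤ -|a| := neg_le_neg (le_max_left _ _)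
                _ ≤ a := neg_abs_le a
                _ ≤ X ω := (hbound ω).1
            · calc X ω ≤ b := (hbound ω).2
                _ ≤ |b| := le_abs_self b
                _ ≤ max |a| |b| := le_max_right _ _
    have hint2 : Integrable (fun ω => (b - X ω) / (b - a) * Real.exp (t * a)
        + (X ω - a) / (b - a) * Real.exp (t * b)) μ := by
      apply Integrable.add
      · exact (((integrable_const b).sub hXint).div_const (b - a)).mul_const _
      · exact (((hXint.sub (integrable_const a))).div_const (b - a)).mul_const _
    have hIle : ∫ ω, Real.exp (t * X ω) ∂μ ≤
        b / (b - a) * Real.exp (t * a) + (-a) / (b - a) * Real.exp (t * b) := by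
      calc ∫ ω, Real.exp (t * X ω) ∂μ ≤ ∫ ω, ((b - X ω) / (b - a) * Real.exp (t * a)
          + (X ω - a) / (b - a) * Real.exp (t * b)) ∂μ :=
            integral_mono hExpInt hint2 hconv
        _ = b / (b - a) * Real.exp (t * a) + (-a) / (b - a) * Real.exp (t * b) := by
            have hrw : (fun ω => (b - X ω) / (b - a) * Real.exp (t * a)
                + (X ω - a) / (b - a) * Real.exp (t * b))
                = (fun ω => (b * Real.exp (t * a) - a * Real.exp (t * b)) / (b - a)
                  + ((Real.exp (t * b) - Real.exp (t * a)) / (b - a)) * X ω) := by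
              funext ω; field_simp; ring
            rw [hrw, integral_add (integrable_const _) (hXint.const_mul _),
              integral_const, integral_const_mul, hmean]
            simp
            field_simp
            ring
    -- algebraic bound via hoeffding_core
    set p : ℝ := -a / (b - a) with hp
    have hp0 : 0 ≤ p := div_nonneg (by linarith) hba.le
    have hp1 : p ≤ 1 := by rw [hp, div_le_one hba]; linarith
    set u : ℝ := t * (b - a) with hu
    have hkey : b / (b - a) * Real.exp (t * a) + (-a) / (b - a) * Real.exp (t * b)
        = Real.exp (t * a) * (1 - p + p * Real.exp u) := by
      rw [hp, hu]
      rw [show t * b = t * a + t * (b - a) by ring, Real.exp_add]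
      field_simp
      ring
    have hdpos : 0 < 1 - p + p * Real.exp u := by
      rcases eq_or_lt_of_le hp1 with h | h
      · have := Real.exp_pos u; nlinarith
      · have := Real.exp_pos u; nlinarith
    have hlog := hoeffding_core hp0 hp1 u
    have hfinal : Real.exp (t * a) * (1 - p + p * Real.exp u) ≤
        Real.exp (t ^ 2 * (b - a) ^ 2 / 8) := by
      rw [← Real.exp_log hdpos, ← Real.exp_add, Real.exp_le_exp]
      have hpu : t * a + p * u = 0 := by
        rw [hp, hu]; field_simp; ring
      have hu2 : u ^ 2 = t ^ 2 * (b - a) ^ 2 := by rw [hu]; ring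
      linarith [hlog]
    calc ∫ ω, Real.exp (t * X ω) ∂μ ≤ _ := hIle
      _ = _ := hkey
      _ ≤ _ := hfinal

variable {D : Type*} [MeasurableSpace D]

/-- Hoeffding's lemma, oscillation form. -/
lemma hoeffding_lemma_osc {Ω : Type*} [MeasurableSpace Ω] (μ : Measure Ω) [IsProbabilityMeasure μ]
    (X : Ω → ℝ) (hX : Measurable X) (C : ℝ) (hosc : ∀ x y, |X x - X y| ≤ C)
    (hmean : ∫ ω, X ω ∂μ = 0) (t : ℝ) :
    ∫ ω, Real.exp (t * X ω) ∂μ ≤ Real.exp (t ^ 2 * C ^ 2 / 8) := by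
  have hΩ : Nonempty Ω := by
    by_contra h
    rw [not_nonempty_iff] at h
    have h1 : μ Set.univ = 1 := measure_univ
    rw [Set.univ_eq_empty_iff.2 h, measure_empty] at h1
    exact zero_ne_one h1
  obtain ⟨ω₀⟩ := hΩ
  have hC0 : 0 ≤ C := by have := hosc ω₀ ω₀; simpa using this
  have hbdd : BddBelow (Set.range X) := by
    refine ⟨X ω₀ - C, ?_⟩
    rintro _ ⟨y, rfl⟩
    have := hosc ω₀ y
    rw [abs_le] at this; linarith [this.1]
  have hne : (Set.range X).Nonempty := ⟨X ω₀, Set.mem_range_self ω₀⟩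
  set a : ℝ := sInf (Set.range X) with ha
  have hXa : ∀ ω, a ≤ X ω := fun ω => csInf_le hbdd (Set.mem_range_self ω)
  have hXb : ∀ ω, X ω ≤ a + C := by
    intro ω
    have : X ω - C ≤ a := by
      apply le_csInf hne
      rintro _ ⟨y, rfl⟩
      have := hosc ω y
      rw [abs_le] at this; linarith [this.1]
    linarith
  have := hoeffding_lemma μ X hX a (a + C) (fun ω => ⟨hXa ω, hXb ω⟩) hmean t
  simpa using this

variable {D : Type*} [MeasurableSpace D]

/-- Telescoping: bounded differences implies bounded oscillation. -/
lemma osc_le {m : ℕ} (g : (Fin m → D) → ℝ) (C : ℝ)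
    (hC : ∀ (z : Fin m → D) (i : Fin m) (zi : D), |g z - g (Function.update z i zi)| ≤ C) :
    ∀ z z' : Fin m → D, |g z - g z'| ≤ m * C := by
  have key : ∀ (s : Finset (Fin m)) (z z' : Fin m → D), (∀ i ∉ s, z i = z' i) →
      |g z - g z'| ≤ s.card * C := by
    intro s
    induction s using Finset.induction with
    | empty =>
      intro z z' h
      have : z = z' := funext fun i => h i (Finset.notMem_empty i)
      simp [this]
    | @insert a s ha ih =>
      intro z z' h
      set z'' := Function.update z a (z' a) with hz''
      have h1 : |g z - g z''| ≤ C := hC z a (z' a)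
      have h2 : |g z'' - g z'| ≤ s.card * C := by
        apply ih
        intro i hi
        rcases eq_or_ne i a with rfl | hia
        · simp [hz'']
        · rw [hz'', Function.update_of_ne hia]
          exact h i (by simp [hia, hi])
      calc |g z - g z'| = |(g z - g z'') + (g z'' - g z')| := by ring_nf
        _ ≤ |g z - g z''| + |g z'' - g z'| := abs_add_le _ _
        _ ≤ C + s.card * C := add_le_add h1 h2
        _ = (insert a s).card * C := by
            rw [Finset.card_insert_of_notMem ha]; push_cast; ring
  intro z z'
  have := key Finset.univ z z' (fun i hi => absurd (Finset.mem_univ i) hi)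
  simpa using this

/-- Integrability of `exp (t * f)` for `f` bounded measurable. -/
lemma exp_integrable {Ω : Type*} [MeasurableSpace Ω] {μ : Measure Ω} [IsFiniteMeasure μ]
    {f : Ω → ℝ} (hf : Measurable f) {B : ℝ} (hB : ∀ ω, |f ω| ≤ B) (t : ℝ) :
    Integrable (fun ω => Real.exp (t * f ω)) μ := by
  apply integrable_of_abs_le (hf.const_mul t).exp (K := Real.exp (|t| * B))
  intro ω
  rw [abs_of_pos (Real.exp_pos _), Real.exp_le_exp]
  calc t * f ω ≤ |t * f ω| := le_abs_self _
    _ = |t| * |f ω| := abs_mul _ _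
    _ ≤ |t| * B := mul_le_mul_of_nonneg_left (hB ω) (abs_nonneg t)

/-- mgf tensorization for bounded-differences functions on product spaces. -/
lemma mgf_tensor (μ : Measure D) [IsProbabilityMeasure μ] (C : ℝ) (hC0 : 0 ≤ C) :
    ∀ (m : ℕ) (g : (Fin m → D) → ℝ), Measurable g →
    (∀ (z : Fin m → D) (i : Fin m) (zi : D), |g z - g (Function.update z i zi)| ≤ C) →
    ∀ t : ℝ,
    ∫ z, Real.exp (t * (g z - ∫ w, g w ∂(Measure.pi fun _ : Fin m => μ)))
        ∂(Measure.pi fun _ : Fin m => μ) ≤ Real.exp (t ^ 2 * m * C ^ 2 / 8) := by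
  have hD : Nonempty D := by
    by_contra h
    rw [not_nonempty_iff] at h
    have h1 : μ Set.univ = 1 := measure_univ
    rw [Set.univ_eq_empty_iff.2 h, measure_empty] at h1
    exact zero_ne_one h1
  intro m
  induction m with
  | zero =>
    intro g hg hC t
    have hconst : ∀ z : Fin 0 → D, g z = g (fun i => i.elim0) := fun z =>
      congrArg g (Subsingleton.elim _ _)
    have hI : (∫ w, g w ∂(Measure.pi fun _ : Fin 0 => μ)) = g (fun i => i.elim0) := by
      rw [show (fun w : Fin 0 → D => g w) = (fun _ => g (fun i => i.elim0)) from
        funext fun z => hconst z]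
      simp
    rw [show (fun z : Fin 0 → D => Real.exp (t * (g z - ∫ w, g w ∂(Measure.pi fun _ : Fin 0 => μ))))
        = fun _ => (1 : ℝ) from funext fun z => by rw [hI, hconst z]; simp]
    simp
  | succ m ih =>
    intro g hg hC t
    set ν : Measure (Fin m → D) := Measure.pi fun _ : Fin m => μ with hν
    set ν' : Measure (Fin (m + 1) → D) := Measure.pi fun _ : Fin (m + 1) => μ with hν'
    set e := MeasurableEquiv.piFinSuccAbove (fun _ : Fin (m + 1) => D) 0 with he
    have hMP : MeasurePreserving e ν' (μ.prod ν) :=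
      measurePreserving_piFinSuccAbove (fun _ : Fin (m + 1) => μ) 0
    have hcons : ∀ (x : D) (w : Fin m → D), e.symm (x, w) = Fin.cons x w := by
      intro x w
      show (MeasurableEquiv.piFinSuccAbove (fun _ : Fin (m + 1) => D) 0).symm (x, w) = _
      rw [MeasurableEquiv.piFinSuccAbove_symm_apply]
      exact Fin.insertNth_zero' x w
    set G : D × (Fin m → D) → ℝ := fun p => g (Fin.cons p.1 p.2) with hG
    have hGe : ∀ p, G p = g (e.symm p) := fun p => by rw [hG, hcons p.1 p.2]
    have hGmeas : Measurable G := by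
      rw [show G = g ∘ e.symm from funext fun p => hGe p]
      exact hg.comp e.symm.measurable
    -- bounds
    obtain ⟨x₀⟩ := hD
    set z₀ : Fin (m + 1) → D := fun _ => x₀ with hz₀
    set K : ℝ := |g z₀| + (m + 1) * C with hK
    have hgK : ∀ z, |g z| ≤ K := by
      intro z
      have := osc_le g C hC z z₀
      rw [hK]
      have h2 : |g z| - |g z₀| ≤ |g z - g z₀| := abs_sub_abs_le_abs_sub _ _
      push_cast at this ⊢
      linarith
    have hGK : ∀ p, |G p| ≤ K := fun p => hgK _
    -- h = conditional mean over first coordinate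
    set h : (Fin m → D) → ℝ := fun w => ∫ x, G (x, w) ∂μ with hh
    have hhmeas : Measurable h :=
      (hGmeas.stronglyMeasurable.integral_prod_left').measurable
    have hGxint : ∀ w, Integrable (fun x => G (x, w)) μ := fun w =>
      integrable_of_abs_le (hGmeas.comp (measurable_id.prodMk measurable_const)) (fun x => hGK _)
    have hhK : ∀ w, |h w| ≤ K := by
      intro w
      rw [hh]
      have := norm_integral_le_of_norm_le_const (μ := μ) (f := fun x => G (x, w)) (C := K)
        (ae_of_all _ fun x => by rw [Real.norm_eq_abs]; exact hGK _)
      rw [Real.norm_eq_abs] at this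
      simpa using this
    -- h has bounded differences
    have hhbd : ∀ (w : Fin m → D) (i : Fin m) (wi : D),
        |h w - h (Function.update w i wi)| ≤ C := by
      intro w i wi
      rw [hh]
      simp only
      rw [← integral_sub (hGxint w) (hGxint _)]
      have := norm_integral_le_of_norm_le_const (μ := μ)
        (f := fun x => G (x, w) - G (x, Function.update w i wi)) (C := C)
        (ae_of_all _ fun x => by
          rw [Real.norm_eq_abs, hG]
          simp only
          have hupd : (Fin.cons x (Function.update w i wi) : Fin (m+1) → D)
              = Function.update (Fin.cons x w) i.succ wi := by simp
          rw [hupd]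
          exact hC _ _ _)
      rw [Real.norm_eq_abs] at this
      simpa using this
    -- Fubini identities
    set I : ℝ := ∫ z, g z ∂ν' with hI
    have hgint' : Integrable g ν' := integrable_of_abs_le hg hgK
    have hGint : Integrable G (μ.prod ν) := integrable_of_abs_le hGmeas hGK
    have hI_eq : I = ∫ w, h w ∂ν := by
      rw [hI, ← (MeasurePreserving.symm e hMP).integral_comp' g]
      rw [show (fun p => g (e.symm p)) = G from funext fun p => (hGe p).symm]
      exact integral_prod_symm G hGint
    have hIK : |I| ≤ K := by
      rw [hI]
      have := norm_integral_le_of_norm_le_const (μ := ν') (f := g) (C := K)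
        (ae_of_all _ fun z => by rw [Real.norm_eq_abs]; exact hgK z)
      rw [Real.norm_eq_abs] at this
      simpa using this
    -- main computation
    have hEexp : (fun p : D × (Fin m → D) => Real.exp (t * (G p - I))) =
        fun p => Real.exp (t * (g (e.symm p) - I)) := funext fun p => by rw [hGe]
    have step1 : ∫ z, Real.exp (t * (g z - I)) ∂ν'
        = ∫ w, ∫ x, Real.exp (t * (G (x, w) - I)) ∂μ ∂ν := by
      rw [← (MeasurePreserving.symm e hMP).integral_comp' (fun z => Real.exp (t * (g z - I))), ← hEexp]
      exact integral_prod_symm _ (exp_integrable (hGmeas.sub measurable_const)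
        (B := 2 * K) (fun p => by
          have h1 := abs_le.1 (hGK p)
          have h2 := abs_le.1 hIK
          exact abs_le.2 (by constructor <;> simp only [Pi.sub_apply] <;> linarith [hI])) t)
    have inner_bound : ∀ w, ∫ x, Real.exp (t * (G (x, w) - I)) ∂μ
        ≤ Real.exp (t * (h w - I)) * Real.exp (t ^ 2 * C ^ 2 / 8) := by
      intro w
      set X : D → ℝ := fun x => G (x, w) - h w with hX
      have hXmeas : Measurable X :=
        (hGmeas.comp (measurable_id.prodMk measurable_const)).sub measurable_const
      have hXmean : ∫ x, X x ∂μ = 0 := by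
        rw [hX]
        rw [integral_sub (hGxint w) (integrable_const _)]
        simp [hh]
      have hXosc : ∀ x y, |X x - X y| ≤ C := by
        intro x y
        rw [hX]
        simp only
        rw [show G (x, w) - h w - (G (y, w) - h w) = G (x, w) - G (y, w) by ring, hG]
        simp only
        have hupd : (Fin.cons y w : Fin (m+1) → D) = Function.update (Fin.cons x w) 0 y := by
          funext j
          refine Fin.cases ?_ ?_ j <;> simp [Function.update_apply, Fin.succ_ne_zero]
        rw [hupd]
        exact hC _ _ _
      have hhoef := hoeffding_lemma_osc μ X hXmeas C hXosc hXmean t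
      have hsplit : ∀ x, Real.exp (t * (G (x, w) - I))
          = Real.exp (t * (h w - I)) * Real.exp (t * X x) := by
        intro x
        rw [← Real.exp_add]
        congr 1
        rw [hX]; ring
      rw [show (fun x => Real.exp (t * (G (x, w) - I)))
          = fun x => Real.exp (t * (h w - I)) * Real.exp (t * X x) from funext hsplit]
      rw [integral_const_mul]
      exact mul_le_mul_of_nonneg_left hhoef (Real.exp_pos _).le
    -- integrate the inner bound
    have hXbd : ∀ w x, |G (x, w) - I| ≤ 2 * K := fun w x => by
      have h1 := abs_le.1 (hGK (x, w))
      have h2 := abs_le.1 hIK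
      exact abs_le.2 (by constructor <;> linarith)
    have houter_meas : Measurable fun w => ∫ x, Real.exp (t * (G (x, w) - I)) ∂μ :=
      (((hGmeas.sub measurable_const).const_mul t).exp.stronglyMeasurable.integral_prod_left').measurable
    have houter_bd : ∀ w, |∫ x, Real.exp (t * (G (x, w) - I)) ∂μ| ≤ Real.exp (|t| * (2 * K)) := by
      intro w
      have := norm_integral_le_of_norm_le_const (μ := μ)
        (f := fun x => Real.exp (t * (G (x, w) - I))) (C := Real.exp (|t| * (2 * K)))
        (ae_of_all _ fun x => by
          rw [Real.norm_eq_abs, abs_of_pos (Real.exp_pos _), Real.exp_le_exp]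
          calc t * (G (x, w) - I) ≤ |t * (G (x, w) - I)| := le_abs_self _
            _ = |t| * |G (x, w) - I| := abs_mul _ _
            _ ≤ |t| * (2 * K) := mul_le_mul_of_nonneg_left (hXbd w x) (abs_nonneg t))
      rw [Real.norm_eq_abs] at this
      simpa using this
    have hhIbd : ∀ w, |h w - I| ≤ 2 * K := fun w => by
      have h1 := abs_le.1 (hhK w)
      have h2 := abs_le.1 hIK
      exact abs_le.2 (by constructor <;> linarith)
    have step2 : ∫ w, ∫ x, Real.exp (t * (G (x, w) - I)) ∂μ ∂ν
        ≤ ∫ w, Real.exp (t * (h w - I)) * Real.exp (t ^ 2 * C ^ 2 / 8) ∂ν := by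
      apply integral_mono
      · exact integrable_of_abs_le houter_meas houter_bd
      · exact (exp_integrable (hhmeas.sub measurable_const) hhIbd t).mul_const _
      · exact inner_bound
    have step3 : ∫ w, Real.exp (t * (h w - I)) * Real.exp (t ^ 2 * C ^ 2 / 8) ∂ν
        ≤ Real.exp (t ^ 2 * m * C ^ 2 / 8) * Real.exp (t ^ 2 * C ^ 2 / 8) := by
      rw [integral_mul_const]
      apply mul_le_mul_of_nonneg_right _ (Real.exp_pos _).le
      have := ih h hhmeas hhbd t
      rw [← hI_eq] at this
      exact this
    calc ∫ z, Real.exp (t * (g z - ∫ w, g w ∂ν')) ∂ν' = ∫ z, Real.exp (t * (g z - I)) ∂ν' := by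
          rw [hI]
      _ = _ := step1
      _ ≤ _ := step2
      _ ≤ _ := step3
      _ = Real.exp (t ^ 2 * (m + 1 : ℕ) * C ^ 2 / 8) := by
          rw [← Real.exp_add]; congr 1; push_cast; ring

/-- Upper-tail McDiarmid. -/
lemma mcdiarmid_upper (μ : Measure D) [IsProbabilityMeasure μ]
    (m : ℕ) (g : (Fin m → D) → ℝ) (hg : Measurable g) (C : ℝ)
    (hC : ∀ (z : Fin m → D) (i : Fin m) (zi : D), |g z - g (Function.update z i zi)| ≤ C)
    (hC0 : 0 ≤ C) (ε : ℝ) (hε : 0 < ε) :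
    (Measure.pi fun _ : Fin m => μ)
        {z : Fin m → D | (∫ w, g w ∂(Measure.pi fun _ : Fin m => μ)) + ε * m ≤ g z} ≤
      ENNReal.ofReal (Real.exp (-(2 * ε ^ 2 * m) / C ^ 2)) := by
  have hD : Nonempty D := by
    by_contra h
    rw [not_nonempty_iff] at h
    have h1 : μ Set.univ = 1 := measure_univ
    rw [Set.univ_eq_empty_iff.2 h, measure_empty] at h1
    exact zero_ne_one h1
  set ν' : Measure (Fin m → D) := Measure.pi fun _ : Fin m => μ with hν'
  set I : ℝ := ∫ w, g w ∂ν' with hI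
  rcases hC0.eq_or_lt with hC0' | hCpos
  · -- C = 0: the bound is 1
    have hrhs : ENNReal.ofReal (Real.exp (-(2 * ε ^ 2 * m) / C ^ 2)) = 1 := by
      rw [← hC0']
      norm_num
    rw [hrhs]
    exact prob_le_one
  · -- C > 0: Chernoff
    obtain ⟨x₀⟩ := hD
    set z₀ : Fin m → D := fun _ => x₀ with hz₀
    set K : ℝ := |g z₀| + m * C with hK
    have hgK : ∀ z, |g z| ≤ K := by
      intro z
      have := osc_le g C hC z z₀
      have h2 : |g z| - |g z₀| ≤ |g z - g z₀| := abs_sub_abs_le_abs_sub _ _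
      rw [hK]; linarith
    have hIK : |I| ≤ K := by
      have := norm_integral_le_of_norm_le_const (μ := ν') (f := g) (C := K)
        (ae_of_all _ fun z => by rw [Real.norm_eq_abs]; exact hgK z)
      rw [Real.norm_eq_abs] at this
      simpa using this
    set t : ℝ := 4 * ε / C ^ 2 with ht
    have ht0 : 0 ≤ t := by positivity
    set X : (Fin m → D) → ℝ := fun z => g z - I with hX
    have hXmeas : Measurable X := hg.sub measurable_const
    have hXbd : ∀ z, |X z| ≤ 2 * K := fun z => by
      have h1 := abs_le.1 (hgK z)
      have h2 := abs_le.1 hIK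
      exact abs_le.2 (by constructor <;> rw [hX] <;> simp <;> linarith)
    have hint : Integrable (fun z => Real.exp (t * X z)) ν' := exp_integrable hXmeas hXbd t
    have hcher := ProbabilityTheory.measure_ge_le_exp_mul_mgf (μ := ν') (X := X) (ε * m) ht0 hint
    have hmgf : ProbabilityTheory.mgf X ν' t ≤ Real.exp (t ^ 2 * m * C ^ 2 / 8) := by
      have := mgf_tensor μ C hC0 m g hg hC t
      rw [← hν', ← hI] at this
      exact this
    have hset : {z : Fin m → D | I + ε * m ≤ g z} = {z | ε * m ≤ X z} := by
      ext z
      simp only [Set.mem_setOf_eq, hX]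
      constructor <;> intro <;> linarith
    have hexp_eq : -t * (ε * m) + t ^ 2 * m * C ^ 2 / 8 = -(2 * ε ^ 2 * m) / C ^ 2 := by
      rw [ht]
      field_simp
      ring
    have hfinal : (ν' {z | ε * m ≤ X z}).toReal ≤ Real.exp (-(2 * ε ^ 2 * m) / C ^ 2) := by
      calc (ν' {z | ε * m ≤ X z}).toReal ≤ Real.exp (-t * (ε * m)) * ProbabilityTheory.mgf X ν' t :=
            hcher
        _ ≤ Real.exp (-t * (ε * m)) * Real.exp (t ^ 2 * m * C ^ 2 / 8) :=
            mul_le_mul_of_nonneg_left hmgf (Real.exp_pos _).le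
        _ = Real.exp (-(2 * ε ^ 2 * m) / C ^ 2) := by rw [← Real.exp_add, hexp_eq]
    rw [hset]
    calc ν' {z | ε * m ≤ X z} = ENNReal.ofReal ((ν' {z | ε * m ≤ X z}).toReal) :=
          (ENNReal.ofReal_toReal (measure_ne_top _ _)).symm
      _ ≤ ENNReal.ofReal (Real.exp (-(2 * ε ^ 2 * m) / C ^ 2)) := ENNReal.ofReal_le_ofReal hfinal


end McDiarmidAux

/-- McDiarmid's inequality: if `Z₁, …, Z_m` are i.i.d. with common distribution `μ`
(modelled by the product measure on `Fin m → D`) and `g` satisfies the bounded differences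
condition with constant `C`, then both the upper and lower deviations of `g` from its mean
by `ε·m` have probability at most `exp(-2ε²m/C²)`. -/
theorem stmt_19 {D : Type*} [MeasurableSpace D] (μ : Measure D) [IsProbabilityMeasure μ]
    (m : ℕ) (g : (Fin m → D) → ℝ) (hg : Measurable g) (C : ℝ)
    (hC : ∀ (z : Fin m → D) (i : Fin m) (zi : D),
      |g z - g (Function.update z i zi)| ≤ C)
    (ε : ℝ) (hε : 0 < ε) :
    (Measure.pi fun _ : Fin m => μ)
        {z : Fin m → D | (∫ w, g w ∂(Measure.pi fun _ : Fin m => μ)) + ε * m ≤ g z} ≤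
      ENNReal.ofReal (Real.exp (-(2 * ε ^ 2 * m) / C ^ 2)) ∧
    (Measure.pi fun _ : Fin m => μ)
        {z : Fin m → D | g z ≤ (∫ w, g w ∂(Measure.pi fun _ : Fin m => μ)) - ε * m} ≤
      ENNReal.ofReal (Real.exp (-(2 * ε ^ 2 * m) / C ^ 2)) := by
  rcases Nat.eq_zero_or_pos m with hm | hm
  · subst hm
    have hrhs : ENNReal.ofReal (Real.exp (-(2 * ε ^ 2 * (0 : ℕ)) / C ^ 2)) = 1 := by
      norm_num
    constructor <;> · rw [hrhs]; exact prob_le_one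
  · have hC0 : 0 ≤ C := by
      have hD : Nonempty D := by
        by_contra h
        rw [not_nonempty_iff] at h
        have h1 : μ Set.univ = 1 := measure_univ
        rw [Set.univ_eq_empty_iff.2 h, measure_empty] at h1
        exact zero_ne_one h1
      obtain ⟨x₀⟩ := hD
      set z : Fin m → D := fun _ => x₀
      have i : Fin m := ⟨0, hm⟩
      have := hC z i (z i)
      rwa [Function.update_eq_self, sub_self, abs_zero] at this
    constructor
    · exact mcdiarmid_upper μ m g hg C hC hC0 ε hε
    · have hC' : ∀ (z : Fin m → D) (i : Fin m) (zi : D),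
          |(-g) z - (-g) (Function.update z i zi)| ≤ C := by
        intro z i zi
        have := hC z i zi
        rw [show (-g) z - (-g) (Function.update z i zi)
            = -(g z - g (Function.update z i zi)) by simp; ring, abs_neg]
        exact this
      have := mcdiarmid_upper μ m (-g) (hg.neg) C hC' hC0 ε hε
      have hneg : (∫ w, (-g) w ∂(Measure.pi fun _ : Fin m => μ))
          = -∫ w, g w ∂(Measure.pi fun _ : Fin m => μ) := by
        simp [integral_neg]
      rw [hneg] at this
      have hset : {z : Fin m → D | -∫ w, g w ∂(Measure.pi fun _ : Fin m => μ) + ε * m ≤ (-g) z}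
          = {z : Fin m → D | g z ≤ (∫ w, g w ∂(Measure.pi fun _ : Fin m => μ)) - ε * m} := by
        ext z
        simp only [Set.mem_setOf_eq, Pi.neg_apply]
        constructor <;> intro <;> linarith
      rwa [hset] at this
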